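/- For an i.i.d. source with entropy H over a finite alphabet and any one-to-one code sequence γ, almost surely liminf_n ||γ(X_1,...,X_n)||/n ≥ H. -/

import Mathlib

open MeasureTheory Filter ENNReal Topology

/-- Encode a list of booleans as a natural number: `1` followed by the bits. -/
def boolEncode : List Bool → ℕ :=
  fun l => l.foldr (fun b n => 2 * n + (if b then 1 else 0)) 1

lemma boolEncode_pos (l : List Bool) : 1 ≤ boolEncode l := by
  induction l with
  | nil => simp [boolEncode]
  | cons b t ih => simp only [boolEncode, List.foldr] at *; omega

lemma boolEncode_lt (l : List Bool) : boolEncode l < 2 ^ (l.length + 1) := by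
  induction l with
  | nil => simp [boolEncode]
  | cons b t ih =>
    simp only [boolEncode, List.foldr, List.length_cons] at *
    have : 2 ^ (t.length + 1 + 1) = 2 * 2 ^ (t.length + 1) := by ring
    rw [this]; cases b <;> simp <;> omega

lemma boolEncode_injective : Function.Injective boolEncode := by
  intro l1
  induction l1 with
  | nil =>
    intro l2 h; cases l2 with
    | nil => rfl
    | cons b t =>
      exfalso
      have h1 : boolEncode ([] : List Bool) = 1 := rfl
      have h2 : boolEncode (b :: t) = 2 * boolEncode t + (if b then 1 else 0) := rfl
      have := boolEncode_pos t
      rw [h1, h2] at h; cases b <;> simp at h <;> omega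
  | cons b t ih =>
    intro l2 h; cases l2 with
    | nil =>
      exfalso
      have h1 : boolEncode ([] : List Bool) = 1 := rfl
      have h2 : boolEncode (b :: t) = 2 * boolEncode t + (if b then 1 else 0) := rfl
      have := boolEncode_pos t
      rw [h1, h2] at h; cases b <;> simp at h <;> omega
    | cons c s =>
      have h2 : boolEncode (b :: t) = 2 * boolEncode t + (if b then 1 else 0) := rfl
      have h3 : boolEncode (c :: s) = 2 * boolEncode s + (if c then 1 else 0) := rfl
      rw [h2, h3] at h
      have hbc : b = c := by cases b <;> cases c <;> simp at h ⊢ <;> omega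
      subst hbc
      have : boolEncode t = boolEncode s := by cases b <;> simp at h <;> omega
      rw [ih this]

/-- Counting: at most `2^(m+1)` elements can have code length `≤ m` under an injective code. -/
lemma card_length_le {β : Type*} [Fintype β] [DecidableEq β] (g : β → List Bool)
    (hg : Function.Injective g) (m : ℕ) :
    (Finset.univ.filter (fun x => (g x).length ≤ m)).card ≤ 2 ^ (m + 1) := by
  classical
  have : (Finset.univ.filter (fun x => (g x).length ≤ m)).card ≤
      (Finset.range (2 ^ (m + 1))).card := by
    apply Finset.card_le_card_of_injOn (fun x => boolEncode (g x))
    · intro x hx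
      simp only [Finset.mem_coe, Finset.mem_filter] at hx
      simp only [Finset.mem_coe, Finset.mem_range]
      calc boolEncode (g x) < 2 ^ ((g x).length + 1) := boolEncode_lt _
        _ ≤ 2 ^ (m + 1) := Nat.pow_le_pow_right (by norm_num) (by omega)
    · intro x _ y _ hxy
      exact hg (boolEncode_injective hxy)
  simpa using this

/-- Product formula for the joint distribution of independent variables. -/
lemma meas_prod_eq {α : Type*} [MeasurableSpace α] [MeasurableSingletonClass α]
    {Ω : Type*} [MeasurableSpace Ω] {μ : Measure Ω}
    {X : ℕ → Ω → α}
    (hindep : ProbabilityTheory.iIndepFun (m := fun _ => ‹MeasurableSpace α›) X μ)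
    (n : ℕ) (x : Fin n → α) :
    μ {ω | ∀ i : Fin n, X i ω = x i} = ∏ i : Fin n, μ (X i ⁻¹' {x i}) := by
  classical
  set S : ℕ → Set α := fun i => if h : i < n then {x ⟨i, h⟩} else Set.univ with hS
  have hSmeas : ∀ i, i ∈ Finset.range n → MeasurableSet (S i) := by
    intro i _
    by_cases h : i < n <;> simp [hS, h]
  have hset : {ω | ∀ i : Fin n, X i ω = x i} = ⋂ i ∈ Finset.range n, X i ⁻¹' S i := by
    ext ω
    simp only [Set.mem_setOf_eq, Set.mem_iInter, Finset.mem_range, Set.mem_preimage]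
    constructor
    · intro h i hi
      simp [hS, hi, h ⟨i, hi⟩]
    · intro h i
      have := h i i.isLt
      simpa [hS, i.isLt] using this
  rw [hset, hindep.measure_inter_preimage_eq_mul (Finset.range n) hSmeas]
  rw [← Fin.prod_univ_eq_prod_range (fun i => μ (X i ⁻¹' S i)) n]
  apply Finset.prod_congr rfl
  intro i _
  congr 1
  simp [hS, i.isLt]

/-- For an i.i.d. source with entropy `H` and any one-to-one code sequence `γ`,
almost surely `liminf_n ‖γ(X_1,…,X_n)‖ / n ≥ H`. -/
theorem liminf_code_length_ge_entropy_iid {α : Type*} [Fintype α] [MeasurableSpace α]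
    [MeasurableSingletonClass α]
    {Ω : Type*} [MeasurableSpace Ω] (μ : Measure Ω) [IsProbabilityMeasure μ]
    (X : ℕ → Ω → α) (hXmeas : ∀ i, Measurable (X i))
    (hindep : ProbabilityTheory.iIndepFun (m := fun _ => ‹MeasurableSpace α›) X μ)
    (p : α → ℝ) (hdist : ∀ i a, (μ (X i ⁻¹' {a})).toReal = p a)
    {H : ℝ} (hH : H = -∑ a, p a * Real.logb 2 (p a))
    (γ : ∀ n : ℕ, (Fin n → α) → List Bool) (hγ : ∀ n, Function.Injective (γ n)) :
    ∀ᵐ ω ∂μ, ENNReal.ofReal H ≤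
      atTop.liminf (fun n : ℕ =>
        ((γ n (fun i : Fin n => X i ω)).length : ℝ≥0∞) / (n : ℝ≥0∞)) := by
  classical
  set f : α → ℝ := fun a => -Real.logb 2 (p a) with hf
  set Y : ℕ → Ω → ℝ := fun i ω => f (X i ω) with hY
  have hp_nonneg : ∀ a, 0 ≤ p a := fun a => (hdist 0 a) ▸ ENNReal.toReal_nonneg
  have hmeas_ne_top : ∀ i a, μ (X i ⁻¹' {a}) ≠ ⊤ := fun i a => measure_ne_top μ _
  have hmeasval : ∀ i a, μ (X i ⁻¹' {a}) = ENNReal.ofReal (p a) := by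
    intro i a
    rw [← hdist i a, ENNReal.ofReal_toReal (hmeas_ne_top i a)]
  have hmap : ∀ i, μ.map (X i) = μ.map (X 0) := by
    intro i
    apply MeasureTheory.Measure.ext_of_singleton
    intro a
    rw [Measure.map_apply (hXmeas i) (measurableSet_singleton a),
      Measure.map_apply (hXmeas 0) (measurableSet_singleton a), hmeasval i a, hmeasval 0 a]
  have hident : ∀ i, ProbabilityTheory.IdentDistrib (X i) (X 0) μ μ :=
    fun i => ⟨(hXmeas i).aemeasurable, (hXmeas 0).aemeasurable, hmap i⟩
  have hfmeas : Measurable f := measurable_of_countable f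
  have hYmeas : ∀ i, Measurable (Y i) := fun i => hfmeas.comp (hXmeas i)
  obtain ⟨C, hC⟩ : ∃ C : ℝ, ∀ a, |f a| ≤ C := by
    rcases isEmpty_or_nonempty α with h | h
    · exact ⟨0, fun a => (h.false a).elim⟩
    · exact ⟨Finset.univ.sup' Finset.univ_nonempty (fun a => |f a|), fun a =>
        Finset.le_sup' (fun a => |f a|) (Finset.mem_univ a)⟩
  have hYint : ∀ i, Integrable (Y i) μ := by
    intro i
    exact (integrable_const C).mono' (hYmeas i).aestronglyMeasurable
      (Filter.Eventually.of_forall fun ω => hC _)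
  have hEY : (∫ ω, Y 0 ω ∂μ) = H := by
    have : (∫ ω, Y 0 ω ∂μ) = ∫ a, f a ∂(μ.map (X 0)) := by
      rw [integral_map (hXmeas 0).aemeasurable hfmeas.aestronglyMeasurable]
    rw [this, integral_fintype]
    · rw [hH]
      rw [← Finset.sum_neg_distrib]
      apply Finset.sum_congr rfl
      intro a _
      rw [measureReal_def, Measure.map_apply (hXmeas 0) (measurableSet_singleton a), hdist 0 a]
      simp only [hf, smul_eq_mul]
      ring
    · exact (integrable_map_measure hfmeas.aestronglyMeasurable (hXmeas 0).aemeasurable).mpr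
        (hYint 0)
  have hYindep : Pairwise fun i j => ProbabilityTheory.IndepFun (Y i) (Y j) μ := by
    intro i j hij
    exact (ProbabilityTheory.iIndepFun.indepFun (hindep.comp (fun _ => f) (fun _ => hfmeas)) hij)
  have hslln : ∀ᵐ ω ∂μ, Tendsto (fun n : ℕ => (n : ℝ)⁻¹ * ∑ i ∈ Finset.range n, Y i ω)
      atTop (𝓝 H) := by
    have := ProbabilityTheory.strong_law_ae Y (hYint 0) hYindep
      (fun i => (hident i).comp hfmeas)
    rw [hEY] at this
    simpa [smul_eq_mul] using this
  have hpos : ∀ᵐ ω ∂μ, ∀ i, 0 < p (X i ω) := by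
    rw [ae_all_iff]
    intro i
    have hz : μ (X i ⁻¹' {a : α | p a = 0}) = 0 := by
      have hsub : X i ⁻¹' {a : α | p a = 0} ⊆ ⋃ a ∈ {a : α | p a = 0}, X i ⁻¹' {a} := by
        intro ω hω; exact Set.mem_biUnion hω rfl
      refine measure_mono_null hsub ?_
      refine (measure_biUnion_null_iff (Set.to_countable _)).mpr ?_
      intro a ha
      simp only [Set.mem_setOf_eq] at ha
      rw [hmeasval i a, ha]
      simp
    rw [ae_iff]
    convert hz using 2
    ext ω
    simp only [Set.mem_setOf_eq, Set.mem_preimage, not_lt]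
    constructor
    · intro h; exact le_antisymm h (hp_nonneg _)
    · intro h; exact le_of_eq h
  -- the key claim, for each margin δ > 0
  have key : ∀ δ : ℝ, 0 < δ →
      ∀ᵐ ω ∂μ, ENNReal.ofReal (H - 2*δ) ≤ atTop.liminf (fun n : ℕ =>
        ((γ n (fun i : Fin n => X i ω)).length : ℝ≥0∞) / (n : ℝ≥0∞)) := by
    intro δ hδ
    by_cases hHδ : H - 2*δ ≤ 0
    · filter_upwards with ω
      simp [ENNReal.ofReal_eq_zero.mpr hHδ]
    push_neg at hHδ
    set r : ℝ := (2:ℝ) ^ (-δ) with hr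
    have hr0 : 0 < r := Real.rpow_pos_of_pos two_pos _
    have hr1 : r < 1 := Real.rpow_lt_one_of_one_lt_of_neg one_lt_two (by linarith)
    set θ : ℕ → ℝ := fun n => (2:ℝ) ^ (-((n:ℝ) * (H - δ))) with hθ
    set B : ℕ → Set Ω := fun n =>
      {ω | ((γ n (fun i : Fin n => X i ω)).length : ℝ) < (n:ℝ) * (H - 2*δ)
        ∧ (∏ i : Fin n, p (X i ω)) ≤ θ n} with hB
    have hθpos : ∀ n, 0 < θ n := fun n => Real.rpow_pos_of_pos two_pos _
    have hBbound : ∀ n, μ (B n) ≤ ENNReal.ofReal (2 * r ^ n) := by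
      intro n
      set s : Finset (Fin n → α) := Finset.univ.filter
        (fun x => ((γ n x).length : ℝ) < (n:ℝ) * (H - 2*δ) ∧ (∏ i, p (x i)) ≤ θ n) with hs
      have hsub : B n ⊆ ⋃ x ∈ (s : Set (Fin n → α)), {ω | ∀ i : Fin n, X i ω = x i} := by
        intro ω hω
        refine Set.mem_iUnion₂.mpr ⟨fun i => X i ω, ?_, fun i => rfl⟩
        simp only [hs, Finset.coe_filter, Finset.mem_univ, true_and, Set.mem_setOf_eq]
        exact hω
      have hcard : s.card ≤ 2 ^ (⌊(n:ℝ) * (H - 2*δ)⌋₊ + 1) := by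
        refine le_trans (Finset.card_le_card ?_)
          (card_length_le (γ n) (hγ n) ⌊(n:ℝ) * (H - 2*δ)⌋₊)
        intro x hx
        simp only [hs, Finset.mem_filter] at hx ⊢
        refine ⟨Finset.mem_univ _, ?_⟩
        exact Nat.le_floor hx.2.1.le
      calc μ (B n) ≤ ∑ x ∈ s, μ {ω | ∀ i : Fin n, X i ω = x i} :=
            le_trans (measure_mono hsub) (measure_biUnion_finset_le _ _)
        _ = ∑ x ∈ s, ENNReal.ofReal (∏ i, p (x i)) := by
            apply Finset.sum_congr rfl
            intro x _
            rw [meas_prod_eq hindep n x,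
              ENNReal.ofReal_prod_of_nonneg (fun i _ => hp_nonneg _)]
            exact Finset.prod_congr rfl fun i _ => hmeasval i (x i)
        _ ≤ ∑ _x ∈ s, ENNReal.ofReal (θ n) := by
            apply Finset.sum_le_sum
            intro x hx
            simp only [hs, Finset.mem_filter] at hx
            exact ENNReal.ofReal_le_ofReal hx.2.2
        _ = (s.card : ℝ≥0∞) * ENNReal.ofReal (θ n) := by
            rw [Finset.sum_const, nsmul_eq_mul]
        _ ≤ ((2 ^ (⌊(n:ℝ) * (H - 2*δ)⌋₊ + 1) : ℕ) : ℝ≥0∞) * ENNReal.ofReal (θ n) := by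
            have hle : (s.card : ℝ≥0∞) ≤ ((2 ^ (⌊(n:ℝ) * (H - 2*δ)⌋₊ + 1) : ℕ) : ℝ≥0∞) := by
              exact_mod_cast hcard
            exact mul_le_mul_left hle _
        _ ≤ ENNReal.ofReal (2 * r ^ n) := by
            rw [← ENNReal.ofReal_natCast, ← ENNReal.ofReal_mul (by positivity)]
            apply ENNReal.ofReal_le_ofReal
            have h1 : ((2 ^ (⌊(n:ℝ) * (H - 2*δ)⌋₊ + 1) : ℕ) : ℝ)
                ≤ (2:ℝ) ^ ((n:ℝ) * (H - 2*δ) + 1) := by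
              push_cast
              rw [← Real.rpow_natCast 2 (⌊(n:ℝ) * (H - 2*δ)⌋₊ + 1)]
              apply Real.rpow_le_rpow_of_exponent_le one_le_two
              push_cast
              have := Nat.floor_le (a := (n:ℝ) * (H - 2*δ)) (by positivity)
              linarith
            calc ((2 ^ (⌊(n:ℝ) * (H - 2*δ)⌋₊ + 1) : ℕ) : ℝ) * θ n
                ≤ (2:ℝ) ^ ((n:ℝ) * (H - 2*δ) + 1) * θ n := by
                  exact mul_le_mul_of_nonneg_right h1 (hθpos n).le
              _ = 2 * r ^ n := by
                  rw [hθ, hr, ← Real.rpow_natCast ((2:ℝ) ^ (-δ)) n,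
                    ← Real.rpow_mul (by norm_num), ← Real.rpow_add two_pos]
                  have : (2:ℝ) * (2:ℝ) ^ (-δ * (n:ℝ)) =
                      (2:ℝ) ^ ((1:ℝ) + -δ * (n:ℝ)) := by
                    rw [Real.rpow_add two_pos, Real.rpow_one]
                  rw [this]
                  congr 1
                  ring
    have hBC : ∀ᵐ ω ∂μ, ∀ᶠ n in atTop, ω ∉ B n := by
      apply MeasureTheory.ae_eventually_notMem
      have hsum : (∑' n, μ (B n)) ≤ ∑' n : ℕ, ENNReal.ofReal 2 * (ENNReal.ofReal r) ^ n := by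
        apply ENNReal.tsum_le_tsum
        intro n
        refine le_trans (hBbound n) (le_of_eq ?_)
        rw [ENNReal.ofReal_mul (by norm_num), ENNReal.ofReal_pow hr0.le]
      refine ne_top_of_le_ne_top ?_ hsum
      rw [ENNReal.tsum_mul_left, ENNReal.tsum_geometric]
      apply ENNReal.mul_ne_top ENNReal.ofReal_ne_top
      rw [Ne, ENNReal.inv_eq_top, tsub_eq_zero_iff_le, not_le]
      exact ENNReal.ofReal_lt_one.mpr hr1
    filter_upwards [hBC, hslln, hpos] with ω hωB hωs hωp
    have hev1 : ∀ᶠ (n : ℕ) in atTop, (n:ℝ) * (H - δ) ≤ ∑ i ∈ Finset.range n, Y i ω := by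
      have h1 : ∀ᶠ (n : ℕ) in atTop,
          H - δ < (n:ℝ)⁻¹ * ∑ i ∈ Finset.range n, Y i ω :=
        hωs.eventually (eventually_gt_nhds (show H - δ < H by linarith))
      filter_upwards [h1, eventually_ge_atTop 1] with n hn hn1
      have hn0 : (0:ℝ) < n := by exact_mod_cast Nat.lt_of_lt_of_le Nat.zero_lt_one hn1
      have := mul_lt_mul_of_pos_left hn hn0
      rw [← mul_assoc, mul_inv_cancel₀ hn0.ne', one_mul] at this
      linarith
    apply Filter.le_liminf_of_le (by isBoundedDefault)
    filter_upwards [hωB, hev1, eventually_ge_atTop 1] with n hnB hn1 hnn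
    -- the product is small
    have hqpos : 0 < ∏ i : Fin n, p (X i ω) := Finset.prod_pos fun i _ => hωp i
    have hlogq : Real.logb 2 (∏ i : Fin n, p (X i ω)) ≤ -((n:ℝ) * (H - δ)) := by
      have hsum : Real.logb 2 (∏ i : Fin n, p (X i ω))
          = ∑ i : Fin n, Real.logb 2 (p (X i ω)) := by
        rw [Real.logb, Real.log_prod (s := Finset.univ) (f := fun i : Fin n => p (X i ω)) (fun i _ => (hωp i).ne'), Finset.sum_div]
        rfl
      rw [hsum]
      have : ∑ i : Fin n, Real.logb 2 (p (X i ω)) = -∑ i ∈ Finset.range n, Y i ω := by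
        rw [← Fin.sum_univ_eq_sum_range (fun i => Y i ω) n]
        simp [hY, hf]
      rw [this]
      linarith
    have hq : (∏ i : Fin n, p (X i ω)) ≤ θ n := by
      have : (∏ i : Fin n, p (X i ω)) =
          (2:ℝ) ^ (Real.logb 2 (∏ i : Fin n, p (X i ω))) :=
        (Real.rpow_logb two_pos (by norm_num) hqpos).symm
      rw [this, hθ]
      exact Real.rpow_le_rpow_of_exponent_le one_le_two hlogq
    -- hence the length is long
    have hlen : (n:ℝ) * (H - 2*δ) ≤ ((γ n (fun i : Fin n => X i ω)).length : ℝ) := by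
      by_contra hcon
      push_neg at hcon
      exact hnB ⟨hcon, hq⟩
    -- conclude in ℝ≥0∞
    rw [ENNReal.le_div_iff_mul_le
      (Or.inl (show (n:ℝ≥0∞) ≠ 0 by exact_mod_cast Nat.one_le_iff_ne_zero.mp hnn))
      (Or.inl (ENNReal.natCast_ne_top n))]
    calc ENNReal.ofReal (H - 2*δ) * (n : ℝ≥0∞)
        = ENNReal.ofReal ((H - 2*δ) * n) := by
          rw [ENNReal.ofReal_mul hHδ.le, ENNReal.ofReal_natCast]
      _ ≤ ENNReal.ofReal ((γ n (fun i : Fin n => X i ω)).length : ℝ) := by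
          apply ENNReal.ofReal_le_ofReal
          linarith [hlen]
      _ = ((γ n (fun i : Fin n => X i ω)).length : ℝ≥0∞) := ENNReal.ofReal_natCast _
  -- conclude: take δ = 1/(k+1) → 0
  have key2 : ∀ᵐ ω ∂μ, ∀ k : ℕ, ENNReal.ofReal (H - 2*(1/((k:ℝ)+1))) ≤
      atTop.liminf (fun n : ℕ =>
        ((γ n (fun i : Fin n => X i ω)).length : ℝ≥0∞) / (n : ℝ≥0∞)) :=
    ae_all_iff.mpr fun k => key (1/((k:ℝ)+1)) (by positivity)
  filter_upwards [key2] with ω hω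
  have htend : Tendsto (fun k : ℕ => ENNReal.ofReal (H - 2*(1/((k:ℝ)+1)))) atTop
      (𝓝 (ENNReal.ofReal H)) := by
    apply (ENNReal.continuous_ofReal.tendsto H).comp
    have h0 : Tendsto (fun k : ℕ => 1/((k:ℝ)+1)) atTop (𝓝 0) :=
      tendsto_one_div_add_atTop_nhds_zero_nat
    have := (h0.const_mul 2).const_sub H
    simpa using this
  exact le_of_tendsto' htend (fun k => hω k)
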